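/- arXiv:1708.02463 — 5 statements merged into one kernel-verified Lean document; each statement's English description precedes it below -/
import Mathlib

section
/- Let A be a bounded self-adjoint operator on a complex Hilbert space H and let a < b be real numbers such that the open interval (a, b) contains no point of the real spectrum of A. Let V be a non-negative bounded operator on H with ‖V‖ < b − a. Then the open interval (a + ‖V‖, b) contains no point of the real spectrum of A + V. -/
open ContinuousLinearMap Set

set_option maxHeartbeats 1000000
set_option synthInstance.maxHeartbeats 200000

/-- A non-negative perturbation `V` with `‖V‖ < b - a` shrinks a spectral gap
`(a, b)` of a bounded self-adjoint operator `A` only from the left: the interval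
`(a + ‖V‖, b)` is free of the real spectrum of `A + V`. -/
theorem gap_perturbation_semidefinite
    {H : Type*} [NormedAddCommGroup H] [InnerProductSpace ℂ H] [CompleteSpace H]
    (A V : H →L[ℂ] H) (hA : IsSelfAdjoint A) (a b : ℝ) (hab : a < b)
    (hgap : Set.Ioo a b ∩ spectrum ℝ A = ∅)
    (hV : 0 ≤ V) (hVnorm : ‖V‖ < b - a) :
    Set.Ioo (a + ‖V‖) b ∩ spectrum ℝ (A + V) = ∅ := by
  rw [Set.eq_empty_iff_forall_notMem]
  rintro μ ⟨⟨hμ1, hμ2⟩, hμspec⟩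
  have hV0 : (0:ℝ) ≤ ‖V‖ := norm_nonneg V
  have hμa : a < μ := by linarith
  have hVsa : IsSelfAdjoint V := .of_nonneg hV
  have hμA : μ ∉ spectrum ℝ A := fun h =>
    Set.eq_empty_iff_forall_notMem.mp hgap μ ⟨⟨hμa, hμ2⟩, h⟩
  rw [spectrum.notMem_iff] at hμA
  set u : (H →L[ℂ] H)ˣ := hμA.unit with hu_def
  have hu_coe : (u : H →L[ℂ] H) = algebraMap ℝ _ μ - A := hμA.unit_spec
  have husa : IsSelfAdjoint (u : H →L[ℂ] H) := by
    rw [hu_coe]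
    exact (IsSelfAdjoint.all μ).algebraMap _ |>.sub hA
  have huinvsa : IsSelfAdjoint ((u⁻¹ : _ˣ) : H →L[ℂ] H) := by
    rw [IsSelfAdjoint, ← Ring.inverse_unit, ← Ring.inverse_star, husa.star_eq]
  -- spectral bound on the inverse
  have hinv_le : ((u⁻¹ : _ˣ) : H →L[ℂ] H) ≤ algebraMap ℝ _ (μ - a)⁻¹ := by
    rw [le_algebraMap_iff_spectrum_le huinvsa]
    intro x hx
    have hx0 : x ≠ 0 := by
      rintro rfl
      exact spectrum.zero_notMem ℝ (u⁻¹).isUnit hx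
    have hxinv : x⁻¹ ∈ spectrum ℝ ((u : H →L[ℂ] H)) := by
      have := (spectrum.inv_mem_iff (r := Units.mk0 x hx0) (a := u⁻¹)).mp hx
      simpa using this
    rw [hu_coe, ← spectrum.singleton_sub_eq] at hxinv
    obtain ⟨p, hp, t, ht, hpt⟩ := hxinv
    rw [Set.mem_singleton_iff] at hp
    have hpt' : μ - t = x⁻¹ := by rw [← hp]; exact hpt
    have htab : t ≤ a ∨ b ≤ t := by
      by_contra hcon
      push_neg at hcon
      exact Set.eq_empty_iff_forall_notMem.mp hgap t ⟨⟨hcon.1, hcon.2⟩, ht⟩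
    rcases htab with h | h
    · have h1 : 0 < μ - a := by linarith
      have h2 : μ - a ≤ x⁻¹ := by rw [← hpt']; linarith
      calc x = (x⁻¹)⁻¹ := (inv_inv x).symm
        _ ≤ (μ - a)⁻¹ := by
          exact inv_anti₀ h1 h2
    · have h2 : x⁻¹ < 0 := by rw [← hpt']; linarith
      have hx_neg : x < 0 := by
        by_contra hxx
        push_neg at hxx
        exact absurd (inv_nonneg.mpr hxx) (not_le.mpr h2)
      have : (0:ℝ) < (μ - a)⁻¹ := inv_pos.mpr (by linarith)
      linarith
  -- the square root of V
  set W : H →L[ℂ] H := CFC.sqrt V with hW_def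
  have hW0 : 0 ≤ W := CFC.sqrt_nonneg V
  have hWsa : IsSelfAdjoint W := .of_nonneg hW0
  have hWW : W * W = V := by
    rw [hW_def, ← sq, CFC.sq_sqrt V hV]
  -- bound the sandwiched operator
  have hc : (0:ℝ) ≤ (μ - a)⁻¹ := le_of_lt (inv_pos.mpr (by linarith))
  have hK_le : W * ((u⁻¹ : _ˣ) : H →L[ℂ] H) * W ≤ algebraMap ℝ _ ((μ - a)⁻¹ * ‖V‖) := by
    calc W * ((u⁻¹ : _ˣ) : H →L[ℂ] H) * W
        = star W * ((u⁻¹ : _ˣ) : H →L[ℂ] H) * W := by rw [hWsa.star_eq]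
      _ ≤ star W * (algebraMap ℝ _ (μ - a)⁻¹) * W := star_left_conjugate_le_conjugate hinv_le W
      _ = (μ - a)⁻¹ • (W * W) := by
          rw [hWsa.star_eq, Algebra.algebraMap_eq_smul_one, mul_smul_comm, mul_one,
            smul_mul_assoc]
      _ = (μ - a)⁻¹ • V := by rw [hWW]
      _ ≤ (μ - a)⁻¹ • (algebraMap ℝ _ ‖V‖) :=
          smul_le_smul_of_nonneg_left (IsSelfAdjoint.le_algebraMap_norm_self hVsa) hc
      _ = algebraMap ℝ _ ((μ - a)⁻¹ * ‖V‖) := by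
          rw [map_mul, Algebra.algebraMap_eq_smul_one ((μ - a)⁻¹), smul_mul_assoc, one_mul]
  have hKsa : IsSelfAdjoint (W * ((u⁻¹ : _ˣ) : H →L[ℂ] H) * W) := by
    rw [IsSelfAdjoint, star_mul, star_mul, hWsa.star_eq, huinvsa.star_eq, mul_assoc]
  -- 1 is not in the spectrum of the sandwiched operator
  have h1K : (1:ℝ) ∉ spectrum ℝ (W * ((u⁻¹ : _ˣ) : H →L[ℂ] H) * W) := by
    intro h
    have hle := (le_algebraMap_iff_spectrum_le hKsa).mp hK_le 1 h
    have hlt : (μ - a)⁻¹ * ‖V‖ < 1 := by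
      rw [inv_mul_lt_iff₀ (by linarith : (0:ℝ) < μ - a), mul_one]
      linarith
    linarith
  -- swap the factors
  have h1VU : (1:ℝ) ∉ spectrum ℝ (V * ((u⁻¹ : _ˣ) : H →L[ℂ] H)) := by
    intro h
    apply h1K
    have key : ((1 : ℝˣ) : ℝ) ∈ spectrum ℝ ((W * ((u⁻¹ : _ˣ) : H →L[ℂ] H)) * W) ↔
        ((1 : ℝˣ) : ℝ) ∈ spectrum ℝ (W * (W * ((u⁻¹ : _ˣ) : H →L[ℂ] H))) :=
      spectrum.unit_mem_mul_comm
    rw [← mul_assoc, hWW] at key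
    simpa [mul_assoc] using key.mpr (by simpa using h)
  rw [spectrum.notMem_iff, map_one] at h1VU
  -- conclude
  have hfactor : algebraMap ℝ _ μ - (A + V)
      = (1 - V * ((u⁻¹ : _ˣ) : H →L[ℂ] H)) * (u : H →L[ℂ] H) := by
    rw [sub_mul, one_mul, mul_assoc, Units.inv_mul, mul_one, hu_coe]
    abel
  have : IsUnit (algebraMap ℝ _ μ - (A + V)) := by
    rw [hfactor]
    exact h1VU.mul u.isUnit
  exact (spectrum.mem_iff.mp hμspec) this
end

section
/- Let A be a bounded self-adjoint operator on a complex Hilbert space H whose real spectrum is a disjoint union σ ∪ Σ, and let d > 0 satisfy d ≤ |x − y| for all x ∈ σ and y ∈ Σ. Let V be a non-negative bounded operator on H with ‖V‖ < d. Define ω := {μ ∈ spectrum ℝ (A+V) | ∃ λ ∈ σ, μ − λ ∈ [0, ‖V‖]} and Ω := {μ ∈ spectrum ℝ (A+V) | ∃ λ ∈ Σ, μ − λ ∈ [0, ‖V‖]}. Then spectrum ℝ (A + V) = ω ∪ Ω, the sets ω and Ω are disjoint, and d − ‖V‖ ≤ |x − y| for all x ∈ ω and y ∈ Ω. -/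
open Set Pointwise

lemma isUnit_one_sub_swap {A : Type*} [Ring A] {x y : A} (h : IsUnit (1 - x * y)) :
    IsUnit (1 - y * x) := by
  obtain ⟨u, hu⟩ := h
  set z := ((u⁻¹ : Aˣ) : A) with hz
  have h1 : (1 - x * y) * z = 1 := by rw [← hu]; exact u.mul_inv
  have h2 : z * (1 - x * y) = 1 := by rw [← hu]; exact u.inv_mul
  refine ⟨⟨1 - y * x, 1 + y * z * x, ?_, ?_⟩, rfl⟩
  · have he : (1 - y * x) * (1 + y * z * x) = 1 - y * x + y * ((1 - x * y) * z) * x := by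
      noncomm_ring
    rw [he, h1]; noncomm_ring
  · have he : (1 + y * z * x) * (1 - y * x) = 1 - y * x + y * (z * (1 - x * y)) * x := by
      noncomm_ring
    rw [he, h2]; noncomm_ring

set_option maxHeartbeats 1000000 in
set_option synthInstance.maxHeartbeats 200000 in
lemma spectrum_subset_aux {H : Type*} [NormedAddCommGroup H] [InnerProductSpace ℂ H]
    [CompleteSpace H] (A V : H →L[ℂ] H) (hA : IsSelfAdjoint A) (hV : 0 ≤ V)
    {μ : ℝ} (hμ : μ ∈ spectrum ℝ (A + V)) :
    ∃ l ∈ spectrum ℝ A, μ - l ∈ Set.Icc (0 : ℝ) ‖V‖ := by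
  by_contra hcon
  push_neg at hcon
  have hV0 : (0:ℝ) ≤ ‖V‖ := norm_nonneg V
  set B : H →L[ℂ] H := algebraMap ℝ _ μ - A with hBdef
  have hBsa : IsSelfAdjoint B := by
    refine IsSelfAdjoint.sub ?_ hA
    rw [IsSelfAdjoint, ← algebraMap_star_comm, star_trivial]
  have hBspec : spectrum ℝ B = {μ} - spectrum ℝ A :=
    (spectrum.singleton_sub_eq A μ).symm
  have hBmem : ∀ l ∈ spectrum ℝ B, l < 0 ∨ ‖V‖ < l := by
    intro l hl
    rw [hBspec] at hl
    rw [Set.mem_sub] at hl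
    obtain ⟨m, hmμ, n, hn, rfl⟩ := hl
    rw [Set.mem_singleton_iff] at hmμ
    subst hmμ
    have := hcon n hn
    rw [Set.mem_Icc] at this
    by_contra hcontra
    push_neg at hcontra
    exact this ⟨hcontra.1, hcontra.2⟩
  obtain ⟨b, hbV, hbspec⟩ :
      ∃ b : ℝ, ‖V‖ < b ∧ ∀ l ∈ spectrum ℝ B, l ≠ 0 ∧ l⁻¹ ≤ b⁻¹ := by
    rcases (spectrum ℝ B ∩ Ici 0).eq_empty_or_nonempty with hS | hS
    · refine ⟨‖V‖ + 1, by linarith, fun l hl => ?_⟩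
      have hlneg : l < 0 := by
        by_contra h
        rw [Set.eq_empty_iff_forall_notMem] at hS
        exact hS l ⟨hl, not_lt.mp h⟩
      have h1 : l⁻¹ ≤ 0 := inv_nonpos.mpr hlneg.le
      have h2 : (0:ℝ) ≤ (‖V‖ + 1)⁻¹ := by positivity
      exact ⟨hlneg.ne, by linarith⟩
    · have hcpt : IsCompact (spectrum ℝ B ∩ Ici 0) :=
        (spectrum.isCompact B).inter_right isClosed_Ici
      have hbmem := hcpt.sInf_mem hS
      set b := sInf (spectrum ℝ B ∩ Ici 0) with hbdef
      have hb0 : 0 ≤ b := hbmem.2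
      have hbB : b ∈ spectrum ℝ B := hbmem.1
      have hbpos : ‖V‖ < b := by
        rcases hBmem b hbB with h | h
        · linarith
        · exact h
      have hbpos' : 0 < b := lt_of_le_of_lt hV0 hbpos
      refine ⟨b, hbpos, fun l hl => ?_⟩
      rcases hBmem l hl with h | h
      · have h1 : l⁻¹ ≤ 0 := inv_nonpos.mpr h.le
        have h2 : (0:ℝ) ≤ b⁻¹ := by positivity
        exact ⟨h.ne, by linarith⟩
      · have hlpos : 0 < l := lt_of_le_of_lt hV0 h
        have hlb : b ≤ l := csInf_le hcpt.bddBelow ⟨hl, Set.mem_Ici.mpr hlpos.le⟩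
        exact ⟨hlpos.ne', by gcongr⟩
  have hbpos : (0:ℝ) < b := lt_of_le_of_lt hV0 hbV
  have hcont : ContinuousOn (fun x : ℝ => x⁻¹) (spectrum ℝ B) :=
    ContinuousOn.inv₀ continuousOn_id fun x hx => (hbspec x hx).1
  set R : H →L[ℂ] H := cfc (fun x : ℝ => x⁻¹) B with hRdef
  have h1 : R * B = 1 := by
    rw [hRdef]
    nth_rewrite 2 [← cfc_id' ℝ B]
    rw [← cfc_mul (fun x : ℝ => x⁻¹) (fun x : ℝ => x) B hcont (by fun_prop),
      cfc_congr (g := fun _ : ℝ => (1:ℝ)) (fun x hx => inv_mul_cancel₀ ((hbspec x hx).1))]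
    exact cfc_one ℝ B
  have h2 : B * R = 1 := by
    rw [hRdef]
    nth_rewrite 1 [← cfc_id' ℝ B]
    rw [← cfc_mul (fun x : ℝ => x) (fun x : ℝ => x⁻¹) B (by fun_prop) hcont,
      cfc_congr (g := fun _ : ℝ => (1:ℝ)) (fun x hx => mul_inv_cancel₀ ((hbspec x hx).1))]
    exact cfc_one ℝ B
  have hBunit : IsUnit B := ⟨⟨B, R, h2, h1⟩, rfl⟩
  have hRsa : IsSelfAdjoint R := cfc_predicate _ B
  have hRle : R ≤ algebraMap ℝ _ b⁻¹ :=
    cfc_le_algebraMap _ _ _ (fun x hx => (hbspec x hx).2) hcont hBsa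
  have hVsa : IsSelfAdjoint V := IsSelfAdjoint.of_nonneg hV
  set W := cfc Real.sqrt V with hWdef
  have hW : 0 ≤ W := cfc_nonneg (fun x _ => Real.sqrt_nonneg x)
  have hWsa : IsSelfAdjoint W := cfc_predicate _ V
  have hWW : W * W = V := by
    rw [hWdef, ← cfc_mul Real.sqrt Real.sqrt V (by fun_prop) (by fun_prop),
      cfc_congr (g := fun x : ℝ => x)
        (fun x hx => Real.mul_self_sqrt (spectrum_nonneg_of_nonneg hV hx))]
    exact cfc_id' ℝ V
  have hconj : W * R * W ≤ W * algebraMap ℝ _ b⁻¹ * W := by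
    simpa [hWsa.star_eq] using star_left_conjugate_le_conjugate hRle W
  have hrhs : W * algebraMap ℝ (H →L[ℂ] H) b⁻¹ * W = b⁻¹ • V := by
    rw [Algebra.algebraMap_eq_smul_one, mul_smul_comm, mul_one, smul_mul_assoc, hWW]
  have hVnorm' : V ≤ algebraMap ℝ _ ‖V‖ :=
    IsSelfAdjoint.le_algebraMap_norm_self (IsSelfAdjoint.of_nonneg hV)
  have hsmul : b⁻¹ • V ≤ b⁻¹ • (algebraMap ℝ (H →L[ℂ] H) ‖V‖) :=
    smul_le_smul_of_nonneg_left hVnorm' (by positivity)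
  set c : ℝ := b⁻¹ * ‖V‖ with hcdef
  have hC : W * R * W ≤ algebraMap ℝ _ c := by
    calc W * R * W ≤ b⁻¹ • V := hrhs ▸ hconj
    _ ≤ b⁻¹ • algebraMap ℝ (H →L[ℂ] H) ‖V‖ := hsmul
    _ = algebraMap ℝ _ c := by
        rw [Algebra.algebraMap_eq_smul_one, Algebra.algebraMap_eq_smul_one, smul_smul]
  have hc1 : c < 1 := by
    rw [hcdef, inv_mul_eq_div]
    exact (div_lt_one hbpos).mpr hbV
  have hunit1 : IsUnit (1 - W * R * W) := by
    rw [← spectrum.zero_notMem_iff ℝ]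
    intro h0
    have hpos : 0 ≤ algebraMap ℝ (H →L[ℂ] H) c - W * R * W := sub_nonneg.mpr hC
    have hmem : (0 : ℝ) - (1 - c) ∈ spectrum ℝ
        ((1 - W * R * W) - algebraMap ℝ (H →L[ℂ] H) (1 - c)) := by
      rw [← spectrum.sub_singleton_eq]
      exact Set.sub_mem_sub h0 rfl
    have heq : (1 - W * R * W) - algebraMap ℝ (H →L[ℂ] H) (1 - c)
        = algebraMap ℝ (H →L[ℂ] H) c - W * R * W := by
      rw [map_sub, map_one]; abel
    rw [heq] at hmem
    have := spectrum_nonneg_of_nonneg hpos hmem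
    linarith
  have hunit2 : IsUnit (1 - R * V) := by
    have := isUnit_one_sub_swap (x := W) (y := R * W) (by rwa [← mul_assoc])
    rwa [mul_assoc, hWW] at this
  have hunit : IsUnit (B - V) := by
    have hfact : B * (1 - R * V) = B - V := by
      rw [mul_sub, mul_one, ← mul_assoc, h2, one_mul]
    rw [← hfact]
    exact hBunit.mul hunit2
  rw [spectrum.mem_iff] at hμ
  apply hμ
  have : algebraMap ℝ (H →L[ℂ] H) μ - (A + V) = B - V := by rw [hBdef]; abel
  rwa [this]

/-- If the spectrum of the self-adjoint operator `A` is separated into two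
components `σ ∪ τ` at distance at least `d`, and `V ≥ 0` with `‖V‖ < d`, then the spectrum of
`A + V` is separated into the components `ω` and `Ω` contained in the one-sided neighbourhoods
`σ + [0, ‖V‖]` and `τ + [0, ‖V‖]`, at distance at least `d - ‖V‖`. -/
theorem spectrum_separation_semidefinite
    {H : Type*} [NormedAddCommGroup H] [InnerProductSpace ℂ H] [CompleteSpace H]
    (A V : H →L[ℂ] H) (hA : IsSelfAdjoint A)
    (σ τ : Set ℝ) (hspec : spectrum ℝ A = σ ∪ τ) (hdisj : Disjoint σ τ)
    (d : ℝ) (hd : 0 < d) (hdist : ∀ x ∈ σ, ∀ y ∈ τ, d ≤ |x - y|)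
    (hV : 0 ≤ V) (hVnorm : ‖V‖ < d) :
    spectrum ℝ (A + V) =
        {μ ∈ spectrum ℝ (A + V) | ∃ l ∈ σ, μ - l ∈ Set.Icc (0 : ℝ) ‖V‖} ∪
        {μ ∈ spectrum ℝ (A + V) | ∃ l ∈ τ, μ - l ∈ Set.Icc (0 : ℝ) ‖V‖} ∧
      Disjoint {μ ∈ spectrum ℝ (A + V) | ∃ l ∈ σ, μ - l ∈ Set.Icc (0 : ℝ) ‖V‖}
        {μ ∈ spectrum ℝ (A + V) | ∃ l ∈ τ, μ - l ∈ Set.Icc (0 : ℝ) ‖V‖} ∧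
      ∀ x ∈ {μ ∈ spectrum ℝ (A + V) | ∃ l ∈ σ, μ - l ∈ Set.Icc (0 : ℝ) ‖V‖},
        ∀ y ∈ {μ ∈ spectrum ℝ (A + V) | ∃ l ∈ τ, μ - l ∈ Set.Icc (0 : ℝ) ‖V‖},
          d - ‖V‖ ≤ |x - y| := by
  refine ⟨?_, ?_, ?_⟩
  · apply Set.Subset.antisymm
    · intro μ hμ
      obtain ⟨l, hl, hIcc⟩ := spectrum_subset_aux A V hA hV hμ
      rw [hspec] at hl
      rcases hl with hl | hl
      · exact Or.inl ⟨hμ, l, hl, hIcc⟩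
      · exact Or.inr ⟨hμ, l, hl, hIcc⟩
    · rintro μ (⟨hμ, -⟩ | ⟨hμ, -⟩) <;> exact hμ
  · rw [Set.disjoint_left]
    rintro μ ⟨hμ, l, hl, h0, h1⟩ ⟨hμ', l', hl', h0', h1'⟩
    have hd1 : d ≤ |l - l'| := hdist l hl l' hl'
    have hd2 : |l - l'| ≤ ‖V‖ := abs_le.mpr ⟨by linarith, by linarith⟩
    linarith
  · rintro x ⟨hx, l, hl, hx0, hx1⟩ y ⟨hy, m, hm, hy0, hy1⟩
    have hd' := hdist l hl m hm
    rcases abs_cases (l - m) with ⟨he, -⟩ | ⟨he, -⟩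
    · have : d - ‖V‖ ≤ x - y := by linarith
      exact le_trans this (le_abs_self _)
    · have : d - ‖V‖ ≤ y - x := by linarith
      calc d - ‖V‖ ≤ y - x := this
      _ ≤ |y - x| := le_abs_self _
      _ = |x - y| := abs_sub_comm y x
end

section
/- Let A be a bounded self-adjoint operator on a complex Hilbert space H whose real spectrum is a disjoint union σ ∪ Σ, and let d > 0 satisfy d ≤ |x − y| for all x ∈ σ and y ∈ Σ. Assume in addition that the convex hull of σ is disjoint from Σ, or the convex hull of Σ is disjoint from σ. Let V be a non-negative bounded operator on H, and let Q be an orthogonal projection on H (self-adjoint and idempotent) that commutes with A + V. Let D := E_A(σ) − Q. Then ‖cfc (fun x => 2·|x|·√(1 − x²)) D‖ ≤ ‖V‖/d. -/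
open ContinuousLinearMap Real
set_option maxHeartbeats 1600000
set_option synthInstance.maxHeartbeats 400000

/-- The spectral projection of a bounded (self-adjoint) operator `T` associated with a set
`Δ ⊆ ℝ`, defined via the real continuous functional calculus applied to the indicator
function of `Δ`. -/
noncomputable def specProj {H : Type*} [NormedAddCommGroup H] [InnerProductSpace ℂ H]
    [CompleteSpace H] (T : H →L[ℂ] H) (Δ : Set ℝ) : H →L[ℂ] H :=
  cfc (Set.indicator Δ fun _ => (1 : ℝ)) T

section Aux
variable {H : Type*} [NormedAddCommGroup H] [InnerProductSpace ℂ H] [CompleteSpace H]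

section Aux
variable {H : Type*} [NormedAddCommGroup H] [InnerProductSpace ℂ H] [CompleteSpace H]

local notation "⟪" x ", " y "⟫" => @inner ℂ H _ x y

lemma proj_inner_eq_zero {P : H →L[ℂ] H} (hP : IsSelfAdjoint P) (hP2 : P ∘L P = P)
    (a b : H) : ⟪P a, b - P b⟫ = 0 := by
  have h0 : P (b - P b) = 0 := by
    have := congrArg (fun T : H →L[ℂ] H => T b) hP2
    simp only [comp_apply] at this
    simp [map_sub, this]
  calc ⟪P a, b - P b⟫ = ⟪a, P (b - P b)⟫ := hP.isSymmetric a (b - P b)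
    _ = 0 := by rw [h0]; exact inner_zero_right a

lemma proj_apply_norm_le {P : H →L[ℂ] H} (hP : IsSelfAdjoint P) (hP2 : P ∘L P = P) (x : H) :
    ‖P x‖ ≤ ‖x‖ := by
  rcases eq_or_ne (P x) 0 with h | h
  · simp [h]
  · have hpos : 0 < ‖P x‖ := norm_pos_iff.mpr h
    have h2 : ⟪P x, P x⟫ = ⟪x, P x⟫ := by
      calc ⟪P x, P x⟫ = ⟪x, P (P x)⟫ := hP.isSymmetric x (P x)
        _ = ⟪x, P x⟫ := by
          congr 1
          have := congrArg (fun T : H →L[ℂ] H => T x) hP2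
          simpa only [comp_apply] using this
    have h1 : ‖P x‖ * ‖P x‖ = RCLike.re ⟪x, P x⟫ := by
      rw [← h2, inner_self_eq_norm_mul_norm (𝕜 := ℂ)]
    have h3 : RCLike.re ⟪x, P x⟫ ≤ ‖x‖ * ‖P x‖ :=
      (RCLike.re_le_norm _).trans (norm_inner_le_norm x (P x))
    nlinarith

lemma proj_pythagoras {P : H →L[ℂ] H} (hP : IsSelfAdjoint P) (hP2 : P ∘L P = P) (x : H) :
    ‖P x‖ ^ 2 + ‖x - P x‖ ^ 2 = ‖x‖ ^ 2 := by
  have horth : ⟪P x, x - P x⟫ = 0 := proj_inner_eq_zero hP hP2 x x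
  have := norm_add_sq (𝕜 := ℂ) (P x) (x - P x)
  simp only [horth, map_zero, mul_zero, add_zero] at this
  rw [add_sub_cancel] at this
  linarith

lemma blocks_norm_le {P X Y : H →L[ℂ] H} (hP : IsSelfAdjoint P) (hP2 : P ∘L P = P)
    {c : ℝ} (hc : 0 ≤ c) (hX : ‖X‖ ≤ c) (hY : ‖Y‖ ≤ c) :
    ‖P ∘L X ∘L (1 - P) + (1 - P) ∘L Y ∘L P‖ ≤ c := by
  refine opNorm_le_bound _ hc fun x => ?_
  have hrw : (P ∘L X ∘L (1 - P) + (1 - P) ∘L Y ∘L P : H →L[ℂ] H) x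
      = P (X (x - P x)) + (Y (P x) - P (Y (P x))) := by
    simp [comp_apply, sub_apply, one_apply, map_sub]
  rw [hrw]
  have horth : ⟪P (X (x - P x)), Y (P x) - P (Y (P x))⟫ = 0 :=
    proj_inner_eq_zero hP hP2 _ _
  have hpyth : ‖P (X (x - P x)) + (Y (P x) - P (Y (P x)))‖ ^ 2
      = ‖P (X (x - P x))‖ ^ 2 + ‖Y (P x) - P (Y (P x))‖ ^ 2 := by
    have := norm_add_sq (𝕜 := ℂ) (P (X (x - P x))) (Y (P x) - P (Y (P x)))
    simp only [horth, map_zero, mul_zero, add_zero] at this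
    linarith
  have h1 : ‖P (X (x - P x))‖ ≤ c * ‖x - P x‖ := by
    refine (proj_apply_norm_le hP hP2 _).trans ?_
    exact (X.le_opNorm _).trans (by gcongr)
  have h2 : ‖Y (P x) - P (Y (P x))‖ ≤ c * ‖P x‖ := by
    have hle : ‖Y (P x) - P (Y (P x))‖ ≤ ‖Y (P x)‖ := by
      have := proj_pythagoras hP hP2 (Y (P x))
      nlinarith [norm_nonneg (Y (P x) - P (Y (P x))), norm_nonneg (P (Y (P x))), norm_nonneg (Y (P x))]
    exact hle.trans ((Y.le_opNorm _).trans (by gcongr))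
  have hpyth2 : ‖P x‖ ^ 2 + ‖x - P x‖ ^ 2 = ‖x‖ ^ 2 := proj_pythagoras hP hP2 x
  have hnn := norm_nonneg (P (X (x - P x)) + (Y (P x) - P (Y (P x))))
  have e1 : ‖P (X (x - P x))‖ ^ 2 ≤ (c * ‖x - P x‖) ^ 2 :=
    pow_le_pow_left₀ (norm_nonneg _) h1 2
  have e2 : ‖Y (P x) - P (Y (P x))‖ ^ 2 ≤ (c * ‖P x‖) ^ 2 :=
    pow_le_pow_left₀ (norm_nonneg _) h2 2
  have key : ‖P (X (x - P x)) + (Y (P x) - P (Y (P x)))‖ ^ 2 ≤ (c * ‖x‖) ^ 2 := by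
    have e3 : (c * ‖x - P x‖) ^ 2 + (c * ‖P x‖) ^ 2 = (c * ‖x‖) ^ 2 := by
      linear_combination (c ^ 2) * hpyth2
    rw [hpyth]; linarith
  nlinarith [key, mul_nonneg hc (norm_nonneg x), hnn]

lemma indicator_continuousOn' {σ τ : Set ℝ} {d : ℝ} (hd : 0 < d)
    (hdist : ∀ x ∈ σ, ∀ y ∈ τ, d ≤ |x - y|) :
    ContinuousOn (Set.indicator σ fun _ => (1 : ℝ)) (σ ∪ τ) := by
  intro x hx
  rcases hx with hxσ | hxτ
  · refine (continuousWithinAt_const (b := (1:ℝ))).congr_of_eventuallyEq ?_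
      (by simp [Set.indicator_of_mem hxσ])
    filter_upwards [mem_nhdsWithin_of_mem_nhds (Metric.ball_mem_nhds x hd),
      self_mem_nhdsWithin] with z hz1 hz2
    have hzσ : z ∈ σ := by
      rcases hz2 with h | h
      · exact h
      · exfalso
        have h1 := hdist x hxσ z h
        rw [Metric.mem_ball, Real.dist_eq] at hz1
        rw [abs_sub_comm] at h1
        linarith
    simp [Set.indicator_of_mem hzσ]
  · have hxσ : x ∉ σ := by
      intro hxσ
      have := hdist x hxσ x hxτ
      simp at this
      linarith
    refine (continuousWithinAt_const (b := (0:ℝ))).congr_of_eventuallyEq ?_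
      (by simp [Set.indicator_of_notMem hxσ])
    filter_upwards [mem_nhdsWithin_of_mem_nhds (Metric.ball_mem_nhds x hd),
      self_mem_nhdsWithin] with z hz1 hz2
    have hzσ : z ∉ σ := by
      intro hzσ
      have h1 := hdist z hzσ x hxτ
      rw [Metric.mem_ball, Real.dist_eq] at hz1
      linarith
    simp [Set.indicator_of_notMem hzσ]

lemma specProj_props (A : H →L[ℂ] H) (hA : IsSelfAdjoint A)
    (σ τ : Set ℝ) (hspec : spectrum ℝ A = σ ∪ τ) (hdisj : Disjoint σ τ)
    (d : ℝ) (hd : 0 < d) (hdist : ∀ x ∈ σ, ∀ y ∈ τ, d ≤ |x - y|) :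
    specProj A σ * specProj A σ = specProj A σ ∧ specProj A σ + specProj A τ = 1 := by
  have hχσ : ContinuousOn (Set.indicator σ fun _ => (1:ℝ)) (spectrum ℝ A) := by
    rw [hspec]; exact indicator_continuousOn' hd hdist
  have hdist' : ∀ x ∈ τ, ∀ y ∈ σ, d ≤ |x - y| := fun x hx y hy => by
    rw [abs_sub_comm]; exact hdist y hy x hx
  have hχτ : ContinuousOn (Set.indicator τ fun _ => (1:ℝ)) (spectrum ℝ A) :=
    (indicator_continuousOn' hd hdist').mono (by rw [hspec, Set.union_comm])
  constructor
  · rw [specProj, ← cfc_mul _ _ A hχσ hχσ]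
    exact cfc_congr fun x _ => by by_cases hxσ : x ∈ σ <;> simp [hxσ]
  · rw [specProj, specProj, ← cfc_add (a := A) (f := Set.indicator σ fun _ => (1:ℝ))
      (g := Set.indicator τ fun _ => (1:ℝ)) hχσ hχτ]
    have h1 : cfc (fun x => Set.indicator σ (fun _ => (1:ℝ)) x
        + Set.indicator τ (fun _ => (1:ℝ)) x) A = cfc (fun _ : ℝ => (1:ℝ)) A := by
      apply cfc_congr
      intro x hx
      rw [hspec] at hx
      rcases hx with hxσ | hxτ
      · have hxτ : x ∉ τ := fun h => Set.disjoint_left.mp hdisj hxσ h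
        simp [hxσ, hxτ]
      · have hxσ' : x ∉ σ := fun h => Set.disjoint_left.mp hdisj h hxτ
        simp [hxσ', hxτ]
    rw [h1, ← Pi.one_def, cfc_one ℝ A]

lemma key_commutator_bound (A V Q : H →L[ℂ] H) (hA : IsSelfAdjoint A)
    (σ τ : Set ℝ) (hspec : spectrum ℝ A = σ ∪ τ) (hdisj : Disjoint σ τ)
    (d : ℝ) (hd : 0 < d) (hdist : ∀ x ∈ σ, ∀ y ∈ τ, d ≤ |x - y|)
    (hconv : Disjoint (convexHull ℝ σ) τ)
    (hV : 0 ≤ V) (hQ : IsSelfAdjoint Q) (hQ2 : Q ∘L Q = Q)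
    (hcomm : Q ∘L (A + V) = (A + V) ∘L Q) :
    ‖specProj A σ * Q - Q * specProj A σ‖ ≤ ‖V‖ / (2 * d) := by
  have hrhs : 0 ≤ ‖V‖ / (2 * d) := by positivity
  rcases subsingleton_or_nontrivial H with hsub | hnt
  · haveI : Subsingleton (H →L[ℂ] H) :=
      ⟨fun f g => ContinuousLinearMap.ext fun x => Subsingleton.elim _ _⟩
    rw [Subsingleton.elim (specProj A σ * Q - Q * specProj A σ) 0, norm_zero]
    exact hrhs
  -- continuity of indicators on the spectrum
  have hχσ : ContinuousOn (Set.indicator σ fun _ => (1:ℝ)) (spectrum ℝ A) := by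
    rw [hspec]; exact indicator_continuousOn' hd hdist
  have hdist' : ∀ x ∈ τ, ∀ y ∈ σ, d ≤ |x - y| := fun x hx y hy => by
    rw [abs_sub_comm]; exact hdist y hy x hx
  have hχτ : ContinuousOn (Set.indicator τ fun _ => (1:ℝ)) (spectrum ℝ A) :=
    (indicator_continuousOn' hd hdist').mono
      (by rw [hspec, Set.union_comm])
  set P : H →L[ℂ] H := specProj A σ with hPdef
  have hPcfc : P = cfc (Set.indicator σ fun _ => (1:ℝ)) A := rfl
  set P' : H →L[ℂ] H := cfc (Set.indicator τ fun _ => (1:ℝ)) A with hP'def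
  have hP : IsSelfAdjoint P := cfc_predicate _ A
  have hP' : IsSelfAdjoint P' := cfc_predicate _ A
  have hPP : P * P = P := by
    rw [hPcfc, ← cfc_mul _ _ A hχσ hχσ]
    exact cfc_congr fun x _ => by by_cases hxσ : x ∈ σ <;> simp [hxσ]
  have hP'P' : P' * P' = P' := by
    rw [hP'def, ← cfc_mul _ _ A hχτ hχτ]
    exact cfc_congr fun x _ => by by_cases hxτ : x ∈ τ <;> simp [hxτ]
  have hsum : P + P' = 1 := by
    rw [hPcfc, hP'def, ← cfc_add (a := A) (f := Set.indicator σ fun _ => (1:ℝ)) (g := Set.indicator τ fun _ => (1:ℝ)) hχσ hχτ]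
    have h1 : cfc (fun x => Set.indicator σ (fun _ => (1:ℝ)) x
        + Set.indicator τ (fun _ => (1:ℝ)) x) A = cfc (fun _ : ℝ => (1:ℝ)) A := by
      apply cfc_congr
      intro x hx
      rw [hspec] at hx
      rcases hx with hxσ | hxτ
      · have hxτ : x ∉ τ := fun h => Set.disjoint_left.mp hdisj hxσ h
        simp [hxσ, hxτ]
      · have hxσ' : x ∉ σ := fun h => Set.disjoint_left.mp hdisj h hxτ
        simp [hxσ', hxτ]
    rw [h1, ← Pi.one_def, cfc_one ℝ A]
  rcases Set.eq_empty_or_nonempty σ with hσe | hσne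
  · have hP0 : P = 0 := by
      rw [hPcfc, hσe]
      simp
    rw [hP0]
    simp [hrhs]
  -- geometry of the spectrum
  have hbddA : ∀ x ∈ spectrum ℝ A, |x| ≤ ‖A‖ := fun x hx => by
    have := spectrum.norm_le_norm_of_mem hx
    rwa [Real.norm_eq_abs] at this
  have hσS : σ ⊆ spectrum ℝ A := by rw [hspec]; exact Set.subset_union_left
  have hbddAbove : BddAbove σ :=
    ⟨‖A‖, fun x hx => (le_abs_self x).trans (hbddA x (hσS hx))⟩
  have hbddBelow : BddBelow σ :=
    ⟨-‖A‖, fun x hx => by have := hbddA x (hσS hx); have := neg_abs_le x; linarith⟩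
  set a : ℝ := sInf σ with hadef
  set b : ℝ := sSup σ with hbdef
  have hab : a ≤ b := (csInf_le hbddBelow hσne.some_mem).trans (le_csSup hbddAbove hσne.some_mem)
  set μ : ℝ := (a + b) / 2 with hμdef
  set r : ℝ := (b - a) / 2 with hrdef
  have hr : 0 ≤ r := by rw [hrdef]; linarith
  have hrd : 0 < r + d := by linarith
  have hμa : μ - a = r := by rw [hμdef, hrdef]; ring
  have hbμ : b - μ = r := by rw [hμdef, hrdef]; ring
  have hσμ : ∀ x ∈ σ, |x - μ| ≤ r := by
    intro x hx
    have h1 : a ≤ x := csInf_le hbddBelow hx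
    have h2 : x ≤ b := le_csSup hbddAbove hx
    rw [abs_le]; constructor <;> linarith
  have hτμ : ∀ y ∈ τ, r + d ≤ |y - μ| := by
    intro y hy
    have hcases : y ≤ a - d ∨ b + d ≤ y := by
      by_contra hcon
      push_neg at hcon
      obtain ⟨h1, h2⟩ := hcon
      rcases le_or_gt y a with hya | hya
      · obtain ⟨x, hxσ, hxlt⟩ := exists_lt_of_csInf_lt hσne (show sInf σ < y + d by
          rw [← hadef]; linarith)
        have hax : a ≤ x := csInf_le hbddBelow hxσ
        have habs : |x - y| = x - y := abs_of_nonneg (by linarith)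
        have := hdist x hxσ y hy
        linarith
      · rcases le_or_gt b y with hby | hby
        · obtain ⟨x, hxσ, hxgt⟩ := exists_lt_of_lt_csSup hσne (show y - d < sSup σ by
            rw [← hbdef]; linarith)
          have hxb : x ≤ b := le_csSup hbddAbove hxσ
          have habs : |x - y| = y - x := by rw [abs_of_nonpos (by linarith)]; ring
          have := hdist x hxσ y hy
          linarith
        · by_cases hyσ : y ∈ σ
          · have := hdist y hyσ y hy
            simp at this
            linarith
          · obtain ⟨x₁, hx₁σ, hx₁⟩ := exists_lt_of_csInf_lt hσne (show sInf σ < y by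
              rw [← hadef]; exact hya)
            obtain ⟨x₂, hx₂σ, hx₂⟩ := exists_lt_of_lt_csSup hσne (show y < sSup σ by
              rw [← hbdef]; exact hby)
            have hseg : y ∈ convexHull ℝ σ := by
              have h12 : x₁ ≤ x₂ := by linarith
              have hmem : y ∈ segment ℝ x₁ x₂ := by
                rw [segment_eq_Icc h12]; exact ⟨hx₁.le, hx₂.le⟩
              exact (convex_convexHull ℝ σ).segment_subset
                (subset_convexHull ℝ σ hx₁σ) (subset_convexHull ℝ σ hx₂σ) hmem
            exact (Set.disjoint_left.mp hconv hseg) hy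
    rcases hcases with hc | hc
    · rw [le_abs]; right; linarith
    · rw [le_abs]; left; linarith
  -- the resolvent-like function g
  set g : ℝ → ℝ := fun x => (x - μ) / max ((x - μ)^2) ((r+d)^2) with hgdef
  have hgc : Continuous g := by
    apply Continuous.div (by fun_prop) (by fun_prop)
    intro x
    exact ne_of_gt (lt_of_lt_of_le (by positivity) (le_max_right _ _))
  have hgbound : ∀ x, |g x| ≤ 1/(r+d) := by
    intro x
    rcases le_or_gt |x - μ| (r+d) with h | h
    · have hden : max ((x-μ)^2) ((r+d)^2) = (r+d)^2 := max_eq_right (by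
        nlinarith [sq_abs (x - μ), abs_nonneg (x - μ)])
      have hgx : g x = (x - μ)/(r+d)^2 := by rw [hgdef]; simp only []; rw [hden]
      rw [hgx, abs_div, abs_of_pos (pow_pos hrd 2), div_le_div_iff₀ (pow_pos hrd 2) hrd]
      nlinarith [mul_le_mul_of_nonneg_right h hrd.le]
    · have hden : max ((x-μ)^2) ((r+d)^2) = (x-μ)^2 := max_eq_left (by
        nlinarith [sq_abs (x - μ), abs_nonneg (x - μ)])
      have habs : (0:ℝ) < |x - μ| := by linarith
      have hgx : g x = (x - μ)/(x - μ)^2 := by rw [hgdef]; simp only []; rw [hden]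
      rw [hgx, abs_div, ← sq_abs, abs_of_pos (pow_pos habs 2),
        div_le_div_iff₀ (pow_pos habs 2) hrd]
      nlinarith [mul_le_mul_of_nonneg_left h.le (abs_nonneg (x - μ))]
  have hginv : ∀ x, r + d ≤ |x - μ| → (x - μ) * g x = 1 := by
    intro x hx
    have habs : (0:ℝ) < |x - μ| := by linarith
    have hne : x - μ ≠ 0 := fun h => by rw [h] at habs; simp at habs
    have hden : max ((x-μ)^2) ((r+d)^2) = (x-μ)^2 := max_eq_left (by
      nlinarith [sq_abs (x - μ), abs_nonneg (x - μ)])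
    rw [hgdef]
    simp only []
    rw [hden]
    field_simp
  set R0 : H →L[ℂ] H := cfc g A with hR0def
  have hR0 : ‖R0‖ ≤ 1/(r+d) := by
    rw [hR0def]
    exact norm_cfc_le (by positivity) fun x _ => by
      rw [Real.norm_eq_abs]; exact hgbound x
  -- A - μ as cfc
  set μ' : H →L[ℂ] H := algebraMap ℝ (H →L[ℂ] H) μ with hμ'def
  have hAμ : cfc (fun x : ℝ => x - μ) A = A - μ' := by
    rw [cfc_sub (fun x : ℝ => x) (fun _ : ℝ => μ) A (by fun_prop) (by fun_prop),
      cfc_id' ℝ A, cfc_const μ A]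
  -- key identity : P' = P' * ((A - μ') * R0)
  have hP'eq : P' = P' * ((A - μ') * R0) := by
    have e1 : cfc (fun x => Set.indicator τ (fun _ => (1:ℝ)) x * ((x - μ) * g x)) A
        = P' * ((A - μ') * R0) := by
      rw [cfc_mul _ _ A hχτ (by exact (Continuous.mul (by fun_prop) hgc).continuousOn),
        cfc_mul _ _ A (by fun_prop) hgc.continuousOn, hAμ, hP'def]
    rw [← e1]
    apply cfc_congr
    intro x hx
    by_cases hxτ : x ∈ τ
    · simp [hxτ, hginv x (hτμ x hxτ)]
    · simp [hxτ]
  -- norm of (A - μ') * P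
  have hAMP : (A - μ') * P = cfc (fun x => (x - μ) * Set.indicator σ (fun _ => (1:ℝ)) x) A := by
    rw [cfc_mul _ _ A (by fun_prop) hχσ, hAμ, hPcfc]
  have hAMPnorm : ‖(A - μ') * P‖ ≤ r := by
    rw [hAMP]
    refine norm_cfc_le hr fun x hx => ?_
    by_cases hxσ : x ∈ σ
    · rw [Real.norm_eq_abs]
      simp only [Set.indicator_of_mem hxσ, mul_one]
      exact hσμ x hxσ
    · simp [hxσ, hr]
  -- commutation facts
  have hAP : A * P = P * A := by
    have h := (cfc_commute_cfc (id : ℝ → ℝ) (Set.indicator σ fun _ => (1:ℝ)) A).eq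
    rwa [cfc_id ℝ A, ← hPcfc] at h
  have hAP' : A * P' = P' * A := by
    have h := (cfc_commute_cfc (id : ℝ → ℝ) (Set.indicator τ fun _ => (1:ℝ)) A).eq
    rwa [cfc_id ℝ A, ← hP'def] at h
  have hQQ : Q * Q = Q := hQ2
  have hcommAV : Q * (A + V) = (A + V) * Q := hcomm
  have hAQ : A * Q - Q * A = Q * V - V * Q := by
    have h1 : Q * A + Q * V = A * Q + V * Q := by
      have h := hcommAV
      rw [mul_add, add_mul] at h
      exact h
    calc A * Q - Q * A = (A * Q + V * Q) - (Q * A + V * Q) := by abel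
      _ = (Q * A + Q * V) - (Q * A + V * Q) := by rw [h1]
      _ = Q * V - V * Q := by abel
  -- the operator Z and the Sylvester-type estimate
  set Z : H →L[ℂ] H := P * Q * P' with hZdef
  set W : H →L[ℂ] H := P * (Q * V - V * Q) * P' with hWdef
  have hZA : A * Z - Z * A = W := by
    have e : A * (P * Q * P') - P * Q * P' * A = P * (A * Q - Q * A) * P' := by
      calc A * (P * Q * P') - P * Q * P' * A
          = (A * P) * Q * P' - P * Q * (P' * A) := by noncomm_ring
        _ = (P * A) * Q * P' - P * Q * (A * P') := by rw [hAP, hAP']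
        _ = P * (A * Q - Q * A) * P' := by noncomm_ring
    rw [hZdef, hWdef, e, hAQ]
  have hZμ : Z * (A - μ') = (A - μ') * Z - W := by
    have h3 : Z * A = A * Z - W := by rw [← hZA]; abel
    have h4 : μ' * Z = Z * μ' := Algebra.commutes μ Z
    calc Z * (A - μ') = Z * A - Z * μ' := by noncomm_ring
      _ = A * Z - W - μ' * Z := by rw [h3, h4]
      _ = (A - μ') * Z - W := by noncomm_ring
  have hZeq : Z = ((A - μ') * Z - W) * R0 := by
    calc Z = P * Q * P' := hZdef
      _ = P * Q * (P' * ((A - μ') * R0)) := by rw [← hP'eq]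
      _ = (P * Q * P') * ((A - μ') * R0) := by noncomm_ring
      _ = (Z * (A - μ')) * R0 := by rw [← hZdef]; noncomm_ring
      _ = ((A - μ') * Z - W) * R0 := by rw [hZμ]
  have hPZ : P * Z = Z := by
    rw [hZdef]
    calc P * (P * Q * P') = (P * P) * Q * P' := by noncomm_ring
      _ = P * Q * P' := by rw [hPP]
  have hZnorm : ‖Z‖ * d ≤ ‖W‖ := by
    have h5 : ‖(A - μ') * Z‖ ≤ r * ‖Z‖ := by
      have e2 : (A - μ') * Z = ((A - μ') * P) * Z := by
        conv_lhs => rw [← hPZ]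
        noncomm_ring
      rw [e2]
      exact (norm_mul_le _ _).trans
        (mul_le_mul_of_nonneg_right hAMPnorm (norm_nonneg Z))
    have h6 : ‖Z‖ ≤ (r * ‖Z‖ + ‖W‖) * (1/(r+d)) := by
      calc ‖Z‖ = ‖((A - μ') * Z - W) * R0‖ := by rw [← hZeq]
        _ ≤ ‖(A - μ') * Z - W‖ * ‖R0‖ := norm_mul_le _ _
        _ ≤ (r * ‖Z‖ + ‖W‖) * (1/(r+d)) :=
            mul_le_mul ((norm_sub_le _ _).trans (by linarith)) hR0 (norm_nonneg _)
              (by positivity)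
    have h7 : ‖Z‖ * (r + d) ≤ r * ‖Z‖ + ‖W‖ := by
      rw [mul_one_div, le_div_iff₀ hrd] at h6
      linarith
    nlinarith [norm_nonneg Z]
  -- bound on W via semidefiniteness of V
  set c : ℝ := ‖V‖/2 with hcdef
  have hc : 0 ≤ c := by positivity
  have hVsa : IsSelfAdjoint V := IsSelfAdjoint.of_nonneg hV
  set S0 : H →L[ℂ] H := V - algebraMap ℝ (H →L[ℂ] H) c with hS0def
  have hS0 : ‖S0‖ ≤ c := by
    have hcfc : cfc (fun x : ℝ => x - c) V = S0 := by
      rw [cfc_sub (fun x : ℝ => x) (fun _ : ℝ => c) V (by fun_prop) (by fun_prop),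
        cfc_id' ℝ V, cfc_const c V]
    rw [← hcfc]
    refine norm_cfc_le hc fun x hx => ?_
    rw [Real.norm_eq_abs, abs_le]
    have h8 : 0 ≤ x := spectrum_nonneg_of_nonneg hV hx
    have h9 : x ≤ ‖V‖ := by
      have := spectrum.norm_le_norm_of_mem hx
      rw [Real.norm_eq_abs] at this
      exact (le_abs_self x).trans this
    constructor <;> (rw [hcdef]; rw [hcdef] at *; linarith)
  have hQV : Q * V - V * Q = Q * S0 - S0 * Q := by
    have h10 : algebraMap ℝ (H →L[ℂ] H) c * Q = Q * algebraMap ℝ (H →L[ℂ] H) c :=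
      Algebra.commutes c Q
    rw [hS0def]
    calc Q * V - V * Q
        = Q * (V - algebraMap ℝ (H →L[ℂ] H) c) - (V - algebraMap ℝ (H →L[ℂ] H) c) * Q
          + (Q * algebraMap ℝ (H →L[ℂ] H) c - algebraMap ℝ (H →L[ℂ] H) c * Q) := by
          noncomm_ring
      _ = Q * (V - algebraMap ℝ (H →L[ℂ] H) c) - (V - algebraMap ℝ (H →L[ℂ] H) c) * Q := by
          rw [h10, sub_self, add_zero]
  have hMnorm : ‖Q * V - V * Q‖ ≤ c := by
    rw [hQV]
    have hform : Q * S0 - S0 * Q = Q ∘L S0 ∘L (1 - Q) + (1 - Q) ∘L (-S0) ∘L Q := by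
      simp only [← ContinuousLinearMap.mul_def]
      noncomm_ring
    rw [hform]
    exact blocks_norm_le hQ hQ2 hc hS0 (by rwa [norm_neg])
  have hP'1 : P' = 1 - P := eq_sub_of_add_eq' hsum
  have hPcomp : P ∘L P = P := by rw [← ContinuousLinearMap.mul_def]; exact hPP
  have hWnorm : ‖W‖ ≤ c := by
    have hform : W = P ∘L (Q * V - V * Q) ∘L (1 - P) + (1 - P) ∘L (0 : H →L[ℂ] H) ∘L P := by
      rw [hWdef, hP'1]
      simp only [← ContinuousLinearMap.mul_def]
      noncomm_ring
    rw [hform]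
    exact blocks_norm_le hP hPcomp hc hMnorm (by simp [hc])
  -- the commutator is controlled by Z
  have hstarZ : star Z = P' * Q * P := by
    rw [hZdef, star_mul, star_mul, hP.star_eq, hP'.star_eq, hQ.star_eq]
    noncomm_ring
  have hPZP' : P * Z * P' = Z := by
    rw [hZdef]
    calc P * (P * Q * P') * P' = (P * P) * Q * (P' * P') := by noncomm_ring
      _ = P * Q * P' := by rw [hPP, hP'P']
  have hP'ZP : P' * star Z * P = star Z := by
    rw [hstarZ]
    calc P' * (P' * Q * P) * P = (P' * P') * Q * (P * P) := by noncomm_ring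
      _ = P' * Q * P := by rw [hPP, hP'P']
  have hcomb : P * Q - Q * P = Z - star Z := by
    rw [hZdef, hstarZ, hP'1]
    noncomm_ring
  have hform2 : P * Q - Q * P = P ∘L Z ∘L (1 - P) + (1 - P) ∘L (-(star Z)) ∘L P := by
    have e3 : P ∘L Z ∘L (1 - P) + (1 - P) ∘L (-(star Z)) ∘L P
        = P * Z * P' + -(P' * star Z * P) := by
      rw [hP'1]
      simp only [← ContinuousLinearMap.mul_def]
      noncomm_ring
    rw [e3, hPZP', hP'ZP, hcomb]
    abel
  have hfinal : ‖P * Q - Q * P‖ ≤ ‖Z‖ := by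
    rw [hform2]
    exact blocks_norm_le hP hPcomp (norm_nonneg Z) le_rfl (by rw [norm_neg, norm_star])
  have hZc : ‖Z‖ ≤ c / d := by
    rw [le_div_iff₀ hd]
    linarith
  have : c / d = ‖V‖ / (2 * d) := by
    rw [hcdef, div_div]
  linarith [hfinal, hZc, this.le, this.ge]

end Aux

end Aux

/-- the `sin 2Θ` theorem for semidefinite perturbations, operator version,
under the additional geometric assumption that the convex hull of one spectral component is
disjoint from the other: the constant `π/2` can be replaced by `1`. -/
theorem sin_two_Theta_semidefinite_convex
    {H : Type*} [NormedAddCommGroup H] [InnerProductSpace ℂ H] [CompleteSpace H]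
    (A V Q : H →L[ℂ] H) (hA : IsSelfAdjoint A)
    (σ τ : Set ℝ) (hspec : spectrum ℝ A = σ ∪ τ) (hdisj : Disjoint σ τ)
    (d : ℝ) (hd : 0 < d) (hdist : ∀ x ∈ σ, ∀ y ∈ τ, d ≤ |x - y|)
    (hconv : Disjoint (convexHull ℝ σ) τ ∨ Disjoint (convexHull ℝ τ) σ)
    (hV : 0 ≤ V) (hQ : IsSelfAdjoint Q) (hQ2 : Q ∘L Q = Q)
    (hcomm : Q ∘L (A + V) = (A + V) ∘L Q) :
    ‖cfc (fun x : ℝ => 2 * |x| * Real.sqrt (1 - x ^ 2)) (specProj A σ - Q)‖ ≤ ‖V‖ / d := by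
  have hrhs : 0 ≤ ‖V‖ / d := by positivity
  rcases subsingleton_or_nontrivial H with hsub | hnt
  · haveI : Subsingleton (H →L[ℂ] H) :=
      ⟨fun f g => ContinuousLinearMap.ext fun x => Subsingleton.elim _ _⟩
    rw [Subsingleton.elim (cfc (fun x : ℝ => 2 * |x| * Real.sqrt (1 - x ^ 2))
      (specProj A σ - Q)) 0, norm_zero]
    exact hrhs
  obtain ⟨hPP, hsum⟩ := specProj_props A hA σ τ hspec hdisj d hd hdist
  have hdist' : ∀ x ∈ τ, ∀ y ∈ σ, d ≤ |x - y| := fun x hx y hy => by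
    rw [abs_sub_comm]; exact hdist y hy x hx
  set P : H →L[ℂ] H := specProj A σ with hPdef
  have hP : IsSelfAdjoint P := cfc_predicate _ A
  have hQQ : Q * Q = Q := hQ2
  have hKB : ‖P * Q - Q * P‖ ≤ ‖V‖ / (2 * d) := by
    rcases hconv with hc1 | hc2
    · exact key_commutator_bound A V Q hA σ τ hspec hdisj d hd hdist hc1 hV hQ hQ2 hcomm
    · have h := key_commutator_bound A V Q hA τ σ (by rw [hspec, Set.union_comm]) hdisj.symm
        d hd hdist' hc2 hV hQ hQ2 hcomm
      have hPτ : specProj A τ = 1 - P := eq_sub_of_add_eq' hsum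
      have heq : P * Q - Q * P = -(specProj A τ * Q - Q * specProj A τ) := by
        rw [hPτ]; noncomm_ring
      rw [heq, norm_neg]
      exact h
  set D : H →L[ℂ] H := P - Q with hDdef
  set E : H →L[ℂ] H := P + Q - 1 with hEdef
  have hD : IsSelfAdjoint D := hP.sub hQ
  have hE : IsSelfAdjoint E := (hP.add hQ).sub (IsSelfAdjoint.one (H →L[ℂ] H))
  have halg1 : D * D + E * E = 1 := by
    have e : D * D + E * E = 2 * (P * P) - 2 * P + (2 * (Q * Q) - 2 * Q) + 1 := by
      rw [hDdef, hEdef]; noncomm_ring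
    rw [e, hPP, hQQ]; abel
  set C : H →L[ℂ] H := P * Q - Q * P with hCdef
  have halg2 : D * E = C := by
    have e : D * E = (P * P - P) - (Q * Q - Q) + (P * Q - Q * P) := by
      rw [hDdef, hEdef]; noncomm_ring
    rw [e, hPP, hQQ, hCdef]; abel
  have halg3 : E * D = -C := by
    have e : E * D = (P * P - P) - (Q * Q - Q) - (P * Q - Q * P) := by
      rw [hDdef, hEdef]; noncomm_ring
    rw [e, hPP, hQQ, hCdef]; abel
  have hDle : ∀ x : H, ‖D x‖ ≤ ‖x‖ := by
    intro x
    have happ : D (D x) + E (E x) = x := by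
      have h0 := congrArg (fun T : H →L[ℂ] H => T x) halg1
      simpa [ContinuousLinearMap.mul_apply, ContinuousLinearMap.add_apply,
        ContinuousLinearMap.one_apply] using h0
    have h1 : inner ℂ (D x) (D x) + inner ℂ (E x) (E x) = inner ℂ x x := by
      calc inner ℂ (D x) (D x) + inner ℂ (E x) (E x)
          = inner ℂ x (D (D x)) + inner ℂ x (E (E x)) :=
            congrArg₂ (· + ·) (hD.isSymmetric x (D x)) (hE.isSymmetric x (E x))
        _ = inner ℂ x (D (D x) + E (E x)) := (inner_add_right _ _ _).symm
        _ = inner ℂ x x := by rw [happ]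
    have h2 : ‖D x‖ * ‖D x‖ + ‖E x‖ * ‖E x‖ = ‖x‖ * ‖x‖ := by
      have h3 := congrArg RCLike.re h1
      rw [map_add, inner_self_eq_norm_mul_norm (𝕜 := ℂ), inner_self_eq_norm_mul_norm (𝕜 := ℂ),
        inner_self_eq_norm_mul_norm (𝕜 := ℂ)] at h3
      exact h3
    nlinarith [norm_nonneg (D x), norm_nonneg (E x), norm_nonneg x,
      mul_self_nonneg (‖E x‖)]
  have hDnorm : ‖D‖ ≤ 1 := opNorm_le_bound D zero_le_one
    (fun x => by rw [one_mul]; exact hDle x)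
  have hspecD : ∀ x ∈ spectrum ℝ D, |x| ≤ 1 := fun x hx => by
    have h0 := spectrum.norm_le_norm_of_mem hx
    rw [Real.norm_eq_abs] at h0
    exact h0.trans hDnorm
  set f : ℝ → ℝ := fun x : ℝ => 2 * |x| * Real.sqrt (1 - x ^ 2) with hfdef
  have hfc : Continuous f := by
    apply Continuous.mul
    · fun_prop
    · exact Real.continuous_sqrt.comp (by fun_prop)
  set N : H →L[ℂ] H := cfc f D with hNdef
  have hNsa : IsSelfAdjoint N := cfc_predicate f D
  have hstep : N * N = (4:ℝ) • (D * D * (E * E)) := by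
    rw [hNdef, ← cfc_mul f f D hfc.continuousOn hfc.continuousOn]
    have h4 : cfc (fun x => f x * f x) D = cfc (fun x : ℝ => (4:ℝ) • (x^2 * (1 - x^2))) D := by
      apply cfc_congr
      intro x hx
      have hx1 : x^2 ≤ 1 := by nlinarith [hspecD x hx, sq_abs x, abs_nonneg x]
      have h1x : 0 ≤ 1 - x^2 := by linarith
      have hs := Real.mul_self_sqrt h1x
      rw [hfdef]
      simp only [smul_eq_mul]
      linear_combination (4 * |x|^2) * hs + (4 * (1 - x^2)) * (sq_abs x)
    rw [h4, cfc_smul (4:ℝ) _ D (by fun_prop)]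
    congr 1
    rw [cfc_mul _ _ D (by fun_prop) (by fun_prop), cfc_pow_id D 2]
    have h5 : cfc (fun x : ℝ => 1 - x^2) D = 1 - D^2 := by
      rw [cfc_sub (fun _ : ℝ => (1:ℝ)) (fun x : ℝ => x^2) D (by fun_prop) (by fun_prop),
        cfc_const (1:ℝ) D, cfc_pow_id D 2, map_one]
    rw [h5]
    have h6 : (1 : H →L[ℂ] H) - D * D = E * E := (eq_sub_of_add_eq' halg1).symm
    rw [pow_two, h6]
  have hCCid : D * D * (E * E) = -(C * C) := by
    have hcc : C * C = -(D * D * (E * E)) := by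
      calc C * C = (D * E) * (D * E) := by rw [halg2]
        _ = D * ((E * D) * E) := by noncomm_ring
        _ = D * ((-C) * E) := by rw [halg3]
        _ = -(D * (C * E)) := by noncomm_ring
        _ = -(D * ((D * E) * E)) := by rw [halg2]
        _ = -(D * D * (E * E)) := by noncomm_ring
    rw [hcc, neg_neg]
  have hstarC : star C = -C := by
    rw [hCdef, star_sub, star_mul, star_mul, hP.star_eq, hQ.star_eq, neg_sub]
  set G : H →L[ℂ] H := (2:ℝ) • C with hGdef
  have hGG : G * star G = (4:ℝ) • (D * D * (E * E)) := by
    rw [hGdef, star_smul, hstarC, hCCid, star_trivial]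
    rw [smul_mul_assoc, mul_smul_comm, smul_smul, mul_neg]
    norm_num
  have hnorm1 : ‖N‖ * ‖N‖ = ‖N * N‖ := by
    have h7 : N * N = star N * N := by rw [hNsa.star_eq]
    rw [h7, CStarRing.norm_star_mul_self]
  have hnorm2 : ‖G * star G‖ = ‖G‖ * ‖G‖ := CStarRing.norm_self_mul_star
  have hNG : ‖N‖ = ‖G‖ := by
    have h8 : ‖N‖ * ‖N‖ = ‖G‖ * ‖G‖ := by rw [hnorm1, hstep, ← hGG, hnorm2]
    exact (mul_self_inj (norm_nonneg _) (norm_nonneg _)).mp h8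
  have hGnorm : ‖G‖ = 2 * ‖C‖ := by
    rw [hGdef, norm_smul, Real.norm_eq_abs]
    norm_num
  calc ‖N‖ = 2 * ‖C‖ := by rw [hNG, hGnorm]
    _ ≤ 2 * (‖V‖ / (2 * d)) := by linarith [hKB]
    _ = ‖V‖ / d := by
        field_simp
end

section
/- For every real number v with 0 ≤ v < 1, consider the real 2×2 matrices A := !![−1/2, 0; 0, 1/2] and V := !![v(v+1)/2, v·√(1−v²)/2; v·√(1−v²)/2, v(1−v)/2]. Then V is positive semidefinite, the set of eigenvalues of V is {0, v} (for v > 0; for v = 0 it is {0}), and, setting θ := arcsin(v)/2, the vector (cos θ, −sin θ) satisfies (A + V) *ᵥ (cos θ, −sin θ) = ((v − √(1−v²))/2) • (cos θ, −sin θ); that is, (cos θ, −sin θ) is an eigenvector of A + V with eigenvalue (v − √(1−v²))/2. -/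
open Matrix Real

/-- sharpness example for the semidefinite `sin 2Θ` theorem. For `0 ≤ v < 1`
and the `2 × 2` matrices `A = diag(-1/2, 1/2)` and
`V = !![v(v+1)/2, v√(1-v²)/2; v√(1-v²)/2, v(1-v)/2]`, the matrix `V` is positive semidefinite
with eigenvalue set `{0, v}`, and `(cos θ, -sin θ)` with `θ = arcsin(v)/2` is an eigenvector of
`A + V` for the eigenvalue `(v - √(1-v²))/2`. -/
theorem sharpness_example
    (v : ℝ) (hv0 : 0 ≤ v) (hv1 : v < 1) :
    (!![v * (v + 1) / 2, v * Real.sqrt (1 - v ^ 2) / 2;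
        v * Real.sqrt (1 - v ^ 2) / 2, v * (1 - v) / 2] : Matrix (Fin 2) (Fin 2) ℝ).PosSemidef ∧
    spectrum ℝ (!![v * (v + 1) / 2, v * Real.sqrt (1 - v ^ 2) / 2;
        v * Real.sqrt (1 - v ^ 2) / 2, v * (1 - v) / 2] : Matrix (Fin 2) (Fin 2) ℝ) = {0, v} ∧
    ((!![-(1 / 2), 0; 0, 1 / 2] : Matrix (Fin 2) (Fin 2) ℝ) +
        !![v * (v + 1) / 2, v * Real.sqrt (1 - v ^ 2) / 2;
           v * Real.sqrt (1 - v ^ 2) / 2, v * (1 - v) / 2]) *ᵥ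
        ![Real.cos (Real.arcsin v / 2), -Real.sin (Real.arcsin v / 2)] =
      ((v - Real.sqrt (1 - v ^ 2)) / 2) •
        ![Real.cos (Real.arcsin v / 2), -Real.sin (Real.arcsin v / 2)] := by
  have hv1' : v ≤ 1 := hv1.le
  have hvm : (-1 : ℝ) ≤ v := by linarith
  set s := Real.sqrt (1 - v ^ 2) with hsdef
  have hs0 : 0 ≤ s := Real.sqrt_nonneg _
  have hs2 : s ^ 2 = 1 - v ^ 2 := Real.sq_sqrt (by nlinarith)
  refine ⟨?_, ?_, ?_⟩
  · constructor
    · ext i j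
      fin_cases i <;> fin_cases j <;> simp [Matrix.conjTranspose_apply]
    · intro x
      have h := x
      simp [dotProduct, Matrix.mulVec, Fin.sum_univ_two, Finsupp.sum_fintype]
      nlinarith [mul_nonneg hv0 (sq_nonneg (s * x 0 + (1 - v) * x 1)), sq_nonneg (x 0), sq_nonneg (x 1), mul_nonneg hv0 (sq_nonneg (x 0))]
  · ext μ
    rw [spectrum.mem_iff]
    rw [Matrix.isUnit_iff_isUnit_det, isUnit_iff_ne_zero, not_not]
    have halg : (algebraMap ℝ (Matrix (Fin 2) (Fin 2) ℝ)) μ = Matrix.scalar (Fin 2) μ := rfl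
    rw [halg]
    rw [Matrix.det_fin_two]
    simp only [Matrix.sub_apply, Matrix.scalar_apply, Matrix.smul_apply, Matrix.one_apply,
      Matrix.cons_val', Matrix.cons_val_zero, Matrix.cons_val_one, Matrix.head_cons,
      Matrix.empty_val', Matrix.cons_val_fin_one, Matrix.head_fin_const, smul_eq_mul]
    norm_num
    constructor
    · intro h
      have : μ * (μ - v) = 0 := by nlinarith
      rcases mul_eq_zero.1 this with h' | h'
      · exact Or.inl h'
      · exact Or.inr (by linarith)
    · rintro (rfl | rfl) <;> nlinarith
  · have hsin : Real.sin (Real.arcsin v) = v := Real.sin_arcsin hvm hv1'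
    have hcos : Real.cos (Real.arcsin v) = s := Real.cos_arcsin v
    set θ := Real.arcsin v / 2 with hθ
    have h2θ : Real.arcsin v = 2 * θ := by rw [hθ]; ring
    have h1 : 2 * Real.sin θ * Real.cos θ = v := by
      rw [← hsin, h2θ, Real.sin_two_mul]
    have h2 : 2 * Real.cos θ ^ 2 - 1 = s := by
      rw [← hcos, h2θ, Real.cos_two_mul]
    have hpyth : Real.sin θ ^ 2 + Real.cos θ ^ 2 = 1 := Real.sin_sq_add_cos_sq θ
    funext i
    fin_cases i <;>
      simp [Matrix.mulVec, dotProduct, Fin.sum_univ_two] <;>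
      rw [← h2, ← h1]
    · linear_combination (Real.cos θ) * hpyth
    · linear_combination (2 * Real.sin θ * Real.cos θ ^ 2) * hpyth
end

section
/- Let V be a non-negative bounded operator on a complex Hilbert space H and let P be an orthogonal projection on H (self-adjoint and idempotent), with complementary projection P⊥ := 1 − P. Then 2·‖P⊥ ∘ V ∘ P‖ ≤ ‖V‖ and ‖V‖ ≤ 2·max(‖P ∘ V ∘ P‖, ‖P⊥ ∘ V ∘ P⊥‖). (These are the block-components of V with respect to the orthogonal decomposition H = ran P ⊕ ran P⊥.) -/
set_option maxHeartbeats 1000000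
set_option synthInstance.maxHeartbeats 1000000

open ContinuousLinearMap
open scoped InnerProductSpace ComplexConjugate

/-- Key scalar estimate: if `‖S z‖² ≤ C ‖z‖²` for all `z` and `u ⟂ v`, then
`2‖⟪S u, S v⟫‖ ≤ C ‖u‖ ‖v‖`. -/
private lemma keyA {H : Type*} [NormedAddCommGroup H] [InnerProductSpace ℂ H]
    (S : H →L[ℂ] H) (C : ℝ)
    (hS : ∀ z : H, ‖S z‖ ^ 2 ≤ C * ‖z‖ ^ 2) (u v : H) (huv : ⟪u, v⟫_ℂ = 0) :
    2 * ‖(⟪S u, S v⟫_ℂ)‖ ≤ C * ‖u‖ * ‖v‖ := by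
  rcases eq_or_ne u 0 with rfl | hu
  · simp
  rcases eq_or_ne v 0 with rfl | hv
  · simp
  have hp : (0:ℝ) < ‖u‖ := norm_pos_iff.mpr hu
  have hq : (0:ℝ) < ‖v‖ := norm_pos_iff.mpr hv
  have hC : 0 ≤ C := by
    have h1 := hS u
    have h2 : (0:ℝ) ≤ ‖S u‖ ^ 2 := sq_nonneg _
    nlinarith [pow_pos hp 2]
  set w : ℂ := ⟪S u, S v⟫_ℂ with hw
  rcases eq_or_ne w 0 with hw0 | hw0
  · rw [hw0]
    simpa using by positivity
  set t : ℝ := ‖u‖ / ‖v‖ with htdef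
  have ht : 0 < t := div_pos hp hq
  have htq : t * ‖v‖ = ‖u‖ := div_mul_cancel₀ _ hq.ne'
  have hwn : (‖w‖ : ℝ) ≠ 0 := norm_ne_zero_iff.mpr hw0
  set d : ℂ := conj w / (‖w‖ : ℂ) with hd
  set γ : ℂ := (t : ℝ) * d with hγdef
  have hwc : ((‖w‖ : ℝ) : ℂ) ≠ 0 := by exact_mod_cast hwn
  have hconjw : conj w * w = ((‖w‖ : ℝ) : ℂ) * ((‖w‖ : ℝ) : ℂ) := by
    rw [mul_comm, Complex.mul_conj, Complex.normSq_eq_norm_sq]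
    push_cast
    ring
  have hγw : γ * w = ((t * ‖w‖ : ℝ) : ℂ) := by
    have e : γ * w = (t : ℂ) * ((conj w * w) / ((‖w‖ : ℝ) : ℂ)) := by
      rw [hγdef, hd]; ring
    rw [e, hconjw, mul_div_assoc, div_self hwc, mul_one]
    push_cast
    ring
  have hγn : ‖γ‖ = t := by
    have h2 : ‖((‖w‖ : ℝ) : ℂ)‖ = ‖w‖ := by
      rw [Complex.norm_real, Real.norm_eq_abs, abs_of_nonneg (norm_nonneg w)]
    rw [hγdef, norm_mul, hd, norm_div, RCLike.norm_conj, h2, div_self hwn,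
      Complex.norm_real, Real.norm_eq_abs, abs_of_pos ht, mul_one]
  -- expand ‖S(u + γ v)‖²
  have key := hS (u + γ • v)
  have hSuv : S (u + γ • v) = S u + γ • S v := by
    simp [map_add, map_smul]
  have hinner1 : ⟪S u, γ • S v⟫_ℂ = γ * w := by
    rw [inner_smul_right]
    try rfl
  have hre1 : RCLike.re ⟪S u, γ • S v⟫_ℂ = t * ‖w‖ := by
    rw [hinner1, hγw]
    try simp
  have hlhs : ‖S (u + γ • v)‖ ^ 2
      = ‖S u‖ ^ 2 + 2 * (t * ‖w‖) + t ^ 2 * ‖S v‖ ^ 2 := by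
    rw [hSuv, norm_add_sq (𝕜 := ℂ), hre1, norm_smul, hγn]
    ring
  have hinner2 : ⟪u, γ • v⟫_ℂ = 0 := by
    rw [inner_smul_right, huv, mul_zero]
  have hrhs : ‖u + γ • v‖ ^ 2 = ‖u‖ ^ 2 + t ^ 2 * ‖v‖ ^ 2 := by
    rw [norm_add_sq (𝕜 := ℂ), hinner2, norm_smul, hγn, map_zero]
    ring
  rw [hlhs, hrhs] at key
  have hcs : ‖w‖ ≤ ‖S u‖ * ‖S v‖ := norm_inner_le_norm _ _
  have htq2 : t ^ 2 * ‖v‖ ^ 2 = ‖u‖ ^ 2 := by rw [← htq]; ring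
  have hcs' : t * ‖w‖ ≤ t * (‖S u‖ * ‖S v‖) := mul_le_mul_of_nonneg_left hcs ht.le
  have h4 : 4 * t * ‖w‖ ≤ 2 * C * ‖u‖ ^ 2 := by
    nlinarith [key, htq2, hcs', sq_nonneg (‖S u‖ - t * ‖S v‖)]
  have h6 : C * ‖u‖ * ‖v‖ * (2 * t) = 2 * C * ‖u‖ ^ 2 := by rw [← htq]; ring
  have h5 : 2 * ‖w‖ * (2 * t) ≤ C * ‖u‖ * ‖v‖ * (2 * t) := by linarith [h4, h6.ge, h6.le]
  exact le_of_mul_le_mul_right h5 (by positivity)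

/-- Lemma A.2 for operators: for a non-negative bounded operator `V` and an
orthogonal projection `P` with complement `P⊥ = 1 - P`, the block components of `V` with respect
to `H = ran P ⊕ ran P⊥` satisfy `2‖P⊥ V P‖ ≤ ‖V‖` and `‖V‖ ≤ 2 max(‖P V P‖, ‖P⊥ V P⊥‖)`. -/
theorem block_norm_bounds_of_nonneg
    {H : Type*} [NormedAddCommGroup H] [InnerProductSpace ℂ H] [CompleteSpace H]
    (V P : H →L[ℂ] H) (hV : 0 ≤ V) (hP : IsSelfAdjoint P) (hP2 : P ∘L P = P) :
    2 * ‖(1 - P) ∘L V ∘L P‖ ≤ ‖V‖ ∧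
      ‖V‖ ≤ 2 * max ‖P ∘L V ∘L P‖ ‖(1 - P) ∘L V ∘L (1 - P)‖ := by
  set S : H →L[ℂ] H := CFC.sqrt V with hSdef
  have hS0 : 0 ≤ S := CFC.sqrt_nonneg (a := V)
  have hS2 : S * S = V := CFC.sqrt_mul_sqrt_self V hV
  have hSsa : IsSelfAdjoint S := ((ContinuousLinearMap.nonneg_iff_isPositive S).mp hS0).isSelfAdjoint
  have hSadj : ContinuousLinearMap.adjoint S = S := ContinuousLinearMap.isSelfAdjoint_iff'.mp hSsa
  have hPadj : ContinuousLinearMap.adjoint P = P := ContinuousLinearMap.isSelfAdjoint_iff'.mp hP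
  -- ⟪a, V b⟫ = ⟪S a, S b⟫
  have inner_V : ∀ a b : H, ⟪a, V b⟫_ℂ = ⟪S a, S b⟫_ℂ := by
    intro a b
    have h := ContinuousLinearMap.adjoint_inner_left S (S b) a
    rw [hSadj] at h
    rw [← hS2, ContinuousLinearMap.mul_apply]
    exact h.symm
  have hPinner : ∀ a b : H, ⟪P a, b⟫_ℂ = ⟪a, P b⟫_ℂ := by
    intro a b
    have h := ContinuousLinearMap.adjoint_inner_left P b a
    rw [hPadj] at h
    exact h
  have hPP : ∀ z : H, P (P z) = P z := by
    intro z
    have := DFunLike.congr_fun hP2 z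
    simpa using this
  have hPQ : ∀ z : H, P ((1 - P) z) = 0 := by
    intro z
    simp [sub_apply, one_apply, map_sub, hPP z]
  have hQQ : ∀ z : H, (1 - P) ((1 - P) z) = (1 - P) z := by
    intro z
    rw [sub_apply, ContinuousLinearMap.one_apply, hPQ z, sub_zero]
  have hQinner : ∀ a b : H, ⟪(1 - P) a, b⟫_ℂ = ⟪a, (1 - P) b⟫_ℂ := by
    intro a b
    simp only [sub_apply, ContinuousLinearMap.one_apply, inner_sub_left, inner_sub_right, hPinner]
  -- orthogonality and Pythagoras
  have horth : ∀ a b : H, ⟪P a, (1 - P) b⟫_ℂ = 0 := by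
    intro a b
    rw [hPinner, hPQ, inner_zero_right]
  have pyth : ∀ z : H, ‖P z‖ ^ 2 + ‖(1 - P) z‖ ^ 2 = ‖z‖ ^ 2 := by
    intro z
    have hz : z = P z + (1 - P) z := by simp [sub_apply, one_apply]
    have := norm_add_sq (𝕜 := ℂ) (P z) ((1 - P) z)
    rw [horth] at this
    simp only [map_zero, mul_zero, add_zero] at this
    rw [← hz] at this
    linarith [this]
  have normSq_S : ∀ z : H, ‖S z‖ ^ 2 = RCLike.re ⟪z, V z⟫_ℂ := by
    intro z
    rw [inner_V, inner_self_eq_norm_sq]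
  have hSb : ∀ z : H, ‖S z‖ ^ 2 ≤ ‖V‖ * ‖z‖ ^ 2 := by
    intro z
    rw [normSq_S z]
    calc RCLike.re ⟪z, V z⟫_ℂ ≤ ‖⟪z, V z⟫_ℂ‖ := RCLike.re_le_norm _
      _ ≤ ‖z‖ * ‖V z‖ := norm_inner_le_norm _ _
      _ ≤ ‖z‖ * (‖V‖ * ‖z‖) := by
          exact mul_le_mul_of_nonneg_left (le_opNorm V z) (norm_nonneg z)
      _ = ‖V‖ * ‖z‖ ^ 2 := by ring
  have hPxle : ∀ z : H, ‖P z‖ ≤ ‖z‖ := by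
    intro z
    nlinarith [pyth z, sq_nonneg (‖(1 - P) z‖), norm_nonneg (P z), norm_nonneg z,
      sq_nonneg (‖P z‖ - ‖z‖), sq_nonneg (‖P z‖ + ‖z‖)]
  constructor
  · -- first claim : 2‖Q V P‖ ≤ ‖V‖
    have hbound : ‖(1 - P) ∘L V ∘L P‖ ≤ ‖V‖ / 2 := by
      apply opNorm_le_bound _ (by positivity)
      intro x
      set y : H := ((1 - P) ∘L V ∘L P) x with hy
      have hyv : y = (1 - P) (V (P x)) := by simp [hy, comp_apply]
      have hQy : (1 - P) y = y := by rw [hyv]; exact hQQ _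
      have horth2 : ⟪P x, y⟫_ℂ = 0 := by
        conv_lhs => rw [← hQy]
        exact horth _ _
      have hkey := keyA S ‖V‖ hSb (P x) y horth2
      have hy2 : ‖y‖ ^ 2 ≤ ‖V‖ / 2 * (‖P x‖ * ‖y‖) := by
        have e1 : (‖y‖ : ℝ) ^ 2 = RCLike.re ⟪y, V (P x)⟫_ℂ := by
          have e0 := hQinner y (V (P x))
          rw [hQy, ← hyv] at e0
          rw [← inner_self_eq_norm_sq (𝕜 := ℂ) y, ← e0]
        have e2 : RCLike.re ⟪y, V (P x)⟫_ℂ ≤ ‖⟪S (P x), S y⟫_ℂ‖ := by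
          calc RCLike.re ⟪y, V (P x)⟫_ℂ ≤ ‖⟪y, V (P x)⟫_ℂ‖ := RCLike.re_le_norm _
            _ = ‖⟪S y, S (P x)⟫_ℂ‖ := by rw [inner_V]
            _ = ‖⟪S (P x), S y⟫_ℂ‖ := by rw [← inner_conj_symm, RCLike.norm_conj]
        rw [e1]
        nlinarith [e2, hkey]
      have hPx := hPxle x
      rcases (norm_nonneg y).eq_or_lt.imp_left Eq.symm with h0 | h0
      · rw [h0]; positivity
      · nlinarith [hy2, hPx, norm_nonneg x, mul_le_mul_of_nonneg_right hPx (le_of_lt h0),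
          opNorm_nonneg V]
    linarith [hbound]
  · -- second claim
    set M : ℝ := max ‖P ∘L V ∘L P‖ ‖(1 - P) ∘L V ∘L (1 - P)‖ with hM
    have hM0 : 0 ≤ M := le_trans (norm_nonneg _) (le_max_left _ _)
    have hblock : ∀ (W : H →L[ℂ] H), (∀ z, W (W z) = W z) →
        (∀ a b : H, ⟪W a, b⟫_ℂ = ⟪a, W b⟫_ℂ) →
        ∀ x : H, ‖S (W x)‖ ^ 2 ≤ ‖W ∘L V ∘L W‖ * ‖W x‖ ^ 2 := by
      intro W hWW hWinner x
      set u : H := W x with hu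
      have hWu : W u = u := hWW x
      have e1 : ⟪u, V u⟫_ℂ = ⟪u, (W ∘L V ∘L W) u⟫_ℂ := by
        conv_lhs => rw [← hWu]
        rw [hWinner]
        simp [comp_apply, hWu]
      calc ‖S u‖ ^ 2 = RCLike.re ⟪u, V u⟫_ℂ := normSq_S u
        _ = RCLike.re ⟪u, (W ∘L V ∘L W) u⟫_ℂ := by rw [e1]
        _ ≤ ‖⟪u, (W ∘L V ∘L W) u⟫_ℂ‖ := RCLike.re_le_norm _
        _ ≤ ‖u‖ * ‖(W ∘L V ∘L W) u‖ := norm_inner_le_norm _ _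
        _ ≤ ‖u‖ * (‖W ∘L V ∘L W‖ * ‖u‖) :=
            mul_le_mul_of_nonneg_left (le_opNorm _ u) (norm_nonneg u)
        _ = ‖W ∘L V ∘L W‖ * ‖u‖ ^ 2 := by ring
    have hSnorm : ‖S‖ ≤ Real.sqrt (2 * M) := by
      apply opNorm_le_bound _ (by positivity)
      intro x
      have hx : x = P x + (1 - P) x := by simp [sub_apply, one_apply]
      have hSx : ‖S x‖ ≤ ‖S (P x)‖ + ‖S ((1 - P) x)‖ := by
        conv_lhs => rw [hx]
        rw [map_add]
        exact norm_add_le _ _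
      have hA := hblock P hPP hPinner x
      have hB := hblock (1 - P) hQQ hQinner x
      have hA' : ‖S (P x)‖ ^ 2 ≤ M * ‖P x‖ ^ 2 :=
        le_trans hA (mul_le_mul_of_nonneg_right (le_max_left _ _) (sq_nonneg _))
      have hB' : ‖S ((1 - P) x)‖ ^ 2 ≤ M * ‖(1 - P) x‖ ^ 2 :=
        le_trans hB (mul_le_mul_of_nonneg_right (le_max_right _ _) (sq_nonneg _))
      have h1 : ‖S x‖ ^ 2 ≤ 2 * M * ‖x‖ ^ 2 := by
        nlinarith [hSx, hA', hB', pyth x, sq_nonneg (‖S (P x)‖ - ‖S ((1 - P) x)‖),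
          norm_nonneg (S x), norm_nonneg (S (P x)), norm_nonneg (S ((1 - P) x)),
          sq_nonneg (‖P x‖ - ‖(1 - P) x‖)]
      calc ‖S x‖ = Real.sqrt (‖S x‖ ^ 2) := (Real.sqrt_sq (norm_nonneg _)).symm
        _ ≤ Real.sqrt (2 * M * ‖x‖ ^ 2) := Real.sqrt_le_sqrt h1
        _ = Real.sqrt (2 * M) * ‖x‖ := by
            rw [Real.sqrt_mul (by positivity), Real.sqrt_sq (norm_nonneg _)]
    have hVnorm : ‖V‖ = ‖S‖ * ‖S‖ := by
      conv_lhs => rw [← hS2]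
      nth_rewrite 1 [← hSsa.star_eq]
      exact CStarRing.norm_star_mul_self
    calc ‖V‖ = ‖S‖ * ‖S‖ := hVnorm
      _ ≤ Real.sqrt (2 * M) * Real.sqrt (2 * M) :=
          mul_le_mul hSnorm hSnorm (norm_nonneg _) (Real.sqrt_nonneg _)
      _ = 2 * M := Real.mul_self_sqrt (by positivity)
end
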